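/- Let G=(V,E) be a finite simple connected graph and let S be a nonempty proper subset of V. Then the random walk group centrality satisfies h(S) = 1 if and only if S is a vertex cover of G. -/

import Mathlib

open scoped ENNReal Classical

/-- Probability that the random walk with transition kernel `p`, started at `u`,
hits the set `S` for the first time in exactly `n` steps. -/
noncomputable def firstHitProb {α : Type*} [Fintype α] (p : α → α → ℝ≥0∞) (S : Set α) :
    ℕ → α → ℝ≥0∞
  | 0, u => if u ∈ S then 1 else 0
  | n + 1, u => if u ∈ S then 0 else ∑ w, p u w * firstHitProb p S n w

/-- Hitting time `H(u,S)`: expected number of steps the walk with kernel `p`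
started at `u` takes to reach a vertex of `S` for the first time. -/
noncomputable def hitTime {α : Type*} [Fintype α] (p : α → α → ℝ≥0∞) (S : Set α) (u : α) :
    ℝ≥0∞ :=
  ∑' n : ℕ, (n : ℝ≥0∞) * firstHitProb p S n u

/-- Transition kernel of the simple random walk on a graph with adjacency relation `A`:
from `x` move to each neighbour with equal probability `1/d(x)`. -/
noncomputable def unifKernel {α : Type*} [Fintype α] (A : α → α → Prop) (x y : α) : ℝ≥0∞ :=
  if A x y then ((Finset.univ.filter (A x)).card : ℝ≥0∞)⁻¹ else 0

/-- Random walk group centrality `h(S) = (Σ_{v∈V\S} H(v,S)) / |V\S|`. -/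
noncomputable def rwCentrality {V : Type*} [Fintype V] (G : SimpleGraph V) (S : Set V) :
    ℝ≥0∞ :=
  (∑ v ∈ Finset.univ.filter (fun v : V => v ∉ S), hitTime (unifKernel G.Adj) S v) /
    ((Finset.univ.filter (fun v : V => v ∉ S)).card : ℝ≥0∞)

/-! ### Auxiliary lemmas -/

/-- Total probability of ever hitting `S`. -/
noncomputable def hitProbAux {α : Type*} [Fintype α] (p : α → α → ℝ≥0∞) (S : Set α) (u : α) :
    ℝ≥0∞ :=
  ∑' n : ℕ, firstHitProb p S n u

section aux

variable {V : Type*} [Fintype V]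

lemma sum_eq_of_le_aux {ι : Type*} {s : Finset ι} {f g : ι → ℝ≥0∞}
    (hle : ∀ i ∈ s, f i ≤ g i) (hsum : ∑ i ∈ s, g i ≤ ∑ i ∈ s, f i)
    (hfin : ∑ i ∈ s, f i ≠ ∞) {i : ι} (hi : i ∈ s) : g i = f i := by
  refine le_antisymm ?_ (hle i hi)
  have hA : ∑ j ∈ s.erase i, f j ≠ ∞ := by
    intro h
    apply hfin
    rw [← Finset.add_sum_erase _ f hi, h]
    simp
  have h1 : g i + ∑ j ∈ s.erase i, f j ≤ f i + ∑ j ∈ s.erase i, f j := by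
    calc g i + ∑ j ∈ s.erase i, f j
        ≤ g i + ∑ j ∈ s.erase i, g j :=
          add_le_add_right (Finset.sum_le_sum fun j hj => hle j (Finset.mem_of_mem_erase hj)) _
      _ = ∑ j ∈ s, g j := Finset.add_sum_erase _ g hi
      _ ≤ ∑ j ∈ s, f j := hsum
      _ = f i + ∑ j ∈ s.erase i, f j := (Finset.add_sum_erase _ f hi).symm
  exact (ENNReal.add_le_add_iff_right hA).mp h1

variable (G : SimpleGraph V)

set_option linter.unusedSectionVars false in
lemma exists_adj_of_connected (hconn : G.Connected) [Nontrivial V] (x : V) :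
    ∃ y, G.Adj x y := by
  obtain ⟨y, hy⟩ := exists_ne x
  obtain ⟨w⟩ := hconn.preconnected x y
  cases w with
  | nil => exact absurd rfl hy
  | cons h _ => exact ⟨_, h⟩

lemma unifKernel_ne_zero {x y : V} (h : G.Adj x y) : unifKernel G.Adj x y ≠ 0 := by
  have hcard : (Finset.univ.filter (G.Adj x)).card ≠ 0 := by
    rw [Finset.card_ne_zero, Finset.filter_nonempty_iff]
    exact ⟨y, Finset.mem_univ y, h⟩
  simp [unifKernel, h, ENNReal.inv_ne_zero]

lemma unifKernel_ne_top (x y : V) : unifKernel G.Adj x y ≠ ∞ := by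
  unfold unifKernel
  split
  · rename_i h
    have hcard : (Finset.univ.filter (G.Adj x)).card ≠ 0 := by
      rw [Finset.card_ne_zero, Finset.filter_nonempty_iff]
      exact ⟨y, Finset.mem_univ y, h⟩
    simp [ENNReal.inv_ne_top, hcard]
  · simp

lemma unifKernel_sum (x : V) (hx : ∃ y, G.Adj x y) :
    ∑ w, unifKernel G.Adj x w = 1 := by
  have hcard : (Finset.univ.filter (G.Adj x)).card ≠ 0 := by
    rw [Finset.card_ne_zero, Finset.filter_nonempty_iff]
    obtain ⟨y, hy⟩ := hx
    exact ⟨y, Finset.mem_univ y, hy⟩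
  have : ∑ w, unifKernel G.Adj x w
      = ∑ w ∈ Finset.univ.filter (G.Adj x), ((Finset.univ.filter (G.Adj x)).card : ℝ≥0∞)⁻¹ := by
    rw [Finset.sum_filter]
    exact Finset.sum_congr rfl fun w _ => by simp [unifKernel]
  rw [this, Finset.sum_const, nsmul_eq_mul]
  exact ENNReal.mul_inv_cancel (by exact_mod_cast hcard) (by simp)

variable {S : Set V}

lemma firstHitProb_zero_not_mem {p : V → V → ℝ≥0∞} {u : V} (hu : u ∉ S) :
    firstHitProb p S 0 u = 0 := by
  simp [firstHitProb, hu]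

lemma firstHitProb_succ_not_mem {p : V → V → ℝ≥0∞} {u : V} (hu : u ∉ S) (n : ℕ) :
    firstHitProb p S (n + 1) u = ∑ w, p u w * firstHitProb p S n w := by
  simp [firstHitProb, hu]

lemma firstHitProb_succ_mem {p : V → V → ℝ≥0∞} {u : V} (hu : u ∈ S) (n : ℕ) :
    firstHitProb p S (n + 1) u = 0 := by
  simp [firstHitProb, hu]

lemma hitProbAux_mem {p : V → V → ℝ≥0∞} {u : V} (hu : u ∈ S) :
    hitProbAux p S u = 1 := by
  unfold hitProbAux
  rw [tsum_eq_single 0]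
  · simp [firstHitProb, hu]
  · intro n hn
    obtain ⟨m, rfl⟩ := Nat.exists_eq_succ_of_ne_zero hn
    exact firstHitProb_succ_mem hu m

lemma hitProbAux_not_mem {p : V → V → ℝ≥0∞} {u : V} (hu : u ∉ S) :
    hitProbAux p S u = ∑ w, p u w * hitProbAux p S w := by
  unfold hitProbAux
  rw [tsum_eq_zero_add' ENNReal.summable, firstHitProb_zero_not_mem hu, zero_add]
  have h1 : ∀ n : ℕ, firstHitProb p S (n + 1) u = ∑ w, p u w * firstHitProb p S n w :=
    firstHitProb_succ_not_mem hu
  calc ∑' n : ℕ, firstHitProb p S (n + 1) u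
      = ∑' n : ℕ, ∑ w, p u w * firstHitProb p S n w := by
        exact tsum_congr fun n => h1 n
    _ = ∑ w, ∑' n : ℕ, p u w * firstHitProb p S n w :=
        Summable.tsum_finsetSum fun i _ => ENNReal.summable
    _ = ∑ w, p u w * ∑' n : ℕ, firstHitProb p S n w := by
        exact Finset.sum_congr rfl fun w _ => ENNReal.tsum_mul_left

/-- Minimum principle: the probability of ever hitting `S` is at least 1 (hence equals 1). -/
lemma one_le_hitProbAux (hconn : G.Connected) (hS : S.Nonempty) [Nontrivial V] (v : V) :
    1 ≤ hitProbAux (unifKernel G.Adj) S v := by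
  set p := unifKernel G.Adj with hp
  obtain ⟨v0, _, hmin⟩ := Finset.exists_min_image Finset.univ (hitProbAux p S)
    ⟨v, Finset.mem_univ v⟩
  set m := hitProbAux p S v0 with hm
  have hmin' : ∀ w, m ≤ hitProbAux p S w := fun w => hmin w (Finset.mem_univ w)
  obtain ⟨s, hs⟩ := hS
  have hsm : m ≤ 1 := by rw [← hitProbAux_mem (p := p) hs]; exact hmin' s
  rcases eq_or_lt_of_le hsm with heq | hlt
  · exact heq ▸ hmin' v
  · -- m < 1 leads to a contradiction
    exfalso
    have hclosed : ∀ a b : V, G.Adj a b → hitProbAux p S a = m → hitProbAux p S b = m := by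
      intro a b hab ha
      have haS : a ∉ S := fun h => by
        rw [hitProbAux_mem h] at ha; exact absurd ha.symm (ne_of_lt hlt)
      have hrec : hitProbAux p S a = ∑ w, p a w * hitProbAux p S w := hitProbAux_not_mem haS
      have hsum1 : ∑ w, p a w = 1 := unifKernel_sum G a ⟨b, hab⟩
      have hms : ∑ w, p a w * m = m := by
        rw [← Finset.sum_mul, hsum1, one_mul]
      have hfin : ∑ w, p a w * m ≠ ∞ := by
        rw [hms]; exact ne_top_of_le_ne_top ENNReal.one_ne_top hsm
      have hle : ∀ w ∈ Finset.univ, p a w * m ≤ p a w * hitProbAux p S w :=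
        fun w _ => mul_le_mul_right (hmin' w) _
      have hsle : ∑ w, p a w * hitProbAux p S w ≤ ∑ w, p a w * m := by
        rw [hms, ← hrec, ha]
      have heq2 : p a b * hitProbAux p S b = p a b * m :=
        sum_eq_of_le_aux hle hsle hfin (Finset.mem_univ b)
      exact ((ENNReal.mul_right_inj (unifKernel_ne_zero G hab)
        (unifKernel_ne_top G a b)).mp heq2)
    -- propagate along a walk from v0 to s
    have hwalk : ∀ (a b : V), G.Walk a b → hitProbAux p S a = m → hitProbAux p S b = m := by
      intro a b w
      induction w with
      | nil => exact id
      | cons h _ ih => exact fun ha => ih (hclosed _ _ h ha)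
    obtain ⟨w⟩ := hconn.preconnected v0 s
    have := hwalk v0 s w rfl
    rw [hitProbAux_mem hs] at this
    exact absurd this.symm (ne_of_lt hlt)

end aux

/-- For a finite simple connected graph `G` and a nonempty proper subset `S`
of the vertices, the random walk group centrality satisfies `h(S) = 1` iff `S` is a
vertex cover of `G`. -/
theorem rwCentrality_eq_one_iff_vertexCover {V : Type*} [Fintype V] (G : SimpleGraph V)
    (hconn : G.Connected) (S : Set V) (hS : S.Nonempty) (hSne : S ≠ Set.univ) :
    rwCentrality G S = 1 ↔ ∀ u w : V, G.Adj u w → u ∈ S ∨ w ∈ S := by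
  classical
  set p := unifKernel G.Adj with hp
  obtain ⟨v0, hv0⟩ := Set.ne_univ_iff_exists_notMem S |>.mp hSne
  obtain ⟨s0, hs0⟩ := id hS
  have : Nontrivial V := ⟨s0, v0, fun h => hv0 (h ▸ hs0)⟩
  set F : Finset V := Finset.univ.filter (fun v : V => v ∉ S) with hF
  have hcard0 : (F.card : ℝ≥0∞) ≠ 0 := by
    have : v0 ∈ F := by simp [hF, hv0]
    simp only [ne_eq, Nat.cast_eq_zero, Finset.card_eq_zero]
    intro h
    rw [h] at this
    exact absurd this (Finset.notMem_empty v0)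
  have hcardtop : (F.card : ℝ≥0∞) ≠ ∞ := by simp
  constructor
  · -- h(S) = 1 → vertex cover
    intro h1
    have hsum : ∑ v ∈ F, hitTime p S v = (F.card : ℝ≥0∞) := by
      rw [rwCentrality] at h1
      exact (ENNReal.div_eq_one_iff hcard0 hcardtop).mp h1
    have hge : ∀ v ∈ F, 1 ≤ hitTime p S v := by
      intro v hv
      have hvS : v ∉ S := by simpa [hF] using hv
      have h2 : hitProbAux p S v ≤ hitTime p S v := by
        unfold hitProbAux hitTime
        refine Summable.tsum_le_tsum (fun n => ?_) ENNReal.summable ENNReal.summable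
        cases n with
        | zero => simp [firstHitProb_zero_not_mem hvS]
        | succ m =>
          refine le_mul_of_one_le_left zero_le ?_
          exact_mod_cast Nat.one_le_iff_ne_zero.mpr (Nat.succ_ne_zero m)
      exact le_trans (one_le_hitProbAux G hconn hS v) h2
    have hone : ∀ v ∈ F, hitTime p S v = 1 := by
      intro v hv
      have hfin : ∑ w ∈ F, (1 : ℝ≥0∞) ≠ ∞ := by simp
      have := sum_eq_of_le_aux (f := fun _ => (1 : ℝ≥0∞)) (g := hitTime p S)
        (fun w hw => hge w hw) (by rw [hsum]; simp) hfin hv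
      simpa using this
    intro u w hadj
    by_contra hcon
    push_neg at hcon
    obtain ⟨hu, hw⟩ := hcon
    have huF : u ∈ F := by simp [hF, hu]
    have hTu : hitTime p S u = 1 := hone u huF
    have hPu : 1 ≤ hitProbAux p S u := one_le_hitProbAux G hconn hS u
    -- firstHitProb vanishes for n ≥ 2
    have hvanish : ∀ n : ℕ, 2 ≤ n → firstHitProb p S n u = 0 := by
      intro n0 hn0
      have key : ∑' n : ℕ, (firstHitProb p S n u +
          (if n = n0 then firstHitProb p S n0 u else 0)) ≤ hitTime p S u := by
        unfold hitTime
        refine Summable.tsum_le_tsum (fun n => ?_) ENNReal.summable ENNReal.summable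
        by_cases hn : n = n0
        · subst hn
          rw [if_pos rfl]
          have : firstHitProb p S n u + firstHitProb p S n u
              = 2 * firstHitProb p S n u := by ring
          rw [this]
          exact mul_le_mul_left (by exact_mod_cast hn0) _
        · rw [if_neg hn, add_zero]
          cases n with
          | zero => simp [firstHitProb_zero_not_mem hu]
          | succ m =>
            refine le_mul_of_one_le_left zero_le ?_
            exact_mod_cast Nat.one_le_iff_ne_zero.mpr (Nat.succ_ne_zero m)
      rw [ENNReal.tsum_add, tsum_ite_eq n0 (fun _ => firstHitProb p S n0 u), hTu] at key
      have key2 : 1 + firstHitProb p S n0 u ≤ 1 + 0 := by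
        rw [add_zero]
        exact le_trans (add_le_add_left hPu _) key
      have := (ENNReal.add_le_add_iff_left ENNReal.one_ne_top).mp key2
      exact le_antisymm this zero_le
    have hP1 : hitProbAux p S u = firstHitProb p S 1 u := by
      unfold hitProbAux
      refine tsum_eq_single 1 (fun n hn => ?_)
      match n, hn with
      | 0, _ => exact firstHitProb_zero_not_mem hu
      | (m+2), _ => exact hvanish (m+2) (by omega)
    have hf1 : 1 ≤ firstHitProb p S 1 u := by rw [← hP1]; exact hPu
    have hsum1 : ∑ w', p u w' = 1 := unifKernel_sum G u ⟨w, hadj⟩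
    have hexp : firstHitProb p S 1 u
        = ∑ w', p u w' * (if w' ∈ S then 1 else 0) := by
      rw [firstHitProb_succ_not_mem hu 0]
      exact Finset.sum_congr rfl fun w' _ => by simp [firstHitProb]
    have hle : ∀ w' ∈ Finset.univ, p u w' * (if w' ∈ S then 1 else 0) ≤ p u w' := by
      intro w' _
      split
      · simp
      · simp
    have hsle : ∑ w', p u w' ≤ ∑ w', p u w' * (if w' ∈ S then 1 else 0) := by
      rw [hsum1, ← hexp]; exact hf1
    have hfin : ∑ w', p u w' * (if w' ∈ S then 1 else 0) ≠ ∞ :=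
      ne_top_of_le_ne_top ENNReal.one_ne_top
        (le_trans (Finset.sum_le_sum hle) hsum1.le)
    have := sum_eq_of_le_aux hle hsle hfin (Finset.mem_univ w)
    rw [if_neg hw, mul_zero] at this
    exact unifKernel_ne_zero G hadj this
  · -- vertex cover → h(S) = 1
    intro hcov
    have hT : ∀ v ∈ F, hitTime p S v = 1 := by
      intro v hv
      have hvS : v ∉ S := by simpa [hF] using hv
      have hf1 : firstHitProb p S 1 v = 1 := by
        rw [firstHitProb_succ_not_mem hvS 0]
        have : ∀ w' ∈ Finset.univ, p v w' * firstHitProb p S 0 w' = p v w' := by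
          intro w' _
          by_cases hadj : G.Adj v w'
          · have hw'S : w' ∈ S := (hcov v w' hadj).resolve_left hvS
            simp [firstHitProb, hw'S]
          · simp [hp, unifKernel, hadj]
        rw [Finset.sum_congr rfl this]
        exact unifKernel_sum G v (exists_adj_of_connected G hconn v)
      have hfn : ∀ n : ℕ, n ≠ 1 → (n : ℝ≥0∞) * firstHitProb p S n v = 0 := by
        intro n hn
        match n, hn with
        | 0, _ => simp
        | (m+2), _ =>
          have : firstHitProb p S (m+2) v = 0 := by
            rw [firstHitProb_succ_not_mem hvS (m+1)]
            refine Finset.sum_eq_zero fun w' _ => ?_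
            by_cases hadj : G.Adj v w'
            · have hw'S : w' ∈ S := (hcov v w' hadj).resolve_left hvS
              rw [firstHitProb_succ_mem hw'S m, mul_zero]
            · simp [hp, unifKernel, hadj]
          rw [this, mul_zero]
      unfold hitTime
      rw [tsum_eq_single 1 hfn, hf1, Nat.cast_one, one_mul]
    rw [rwCentrality]
    have : ∑ v ∈ F, hitTime p S v = (F.card : ℝ≥0∞) := by
      rw [Finset.sum_congr rfl hT, Finset.sum_const, nsmul_eq_mul, mul_one]
    rw [this]
    exact ENNReal.div_self hcard0 hcardtop
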